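/- Let p be a prime, m a positive integer, k an integer with 1 ≤ k ≤ m−1, q = p^k and q̄ = p^{m−k}. Let α, b ∈ F be nonzero and a ∈ F. Then the Taniguchi multiplication T(q, α, a, b) on F × F is isotopic to the Taniguchi multiplication T(q̄, α^{−q²}, a·α^{q−1}·b^{−1}, α^{q²−1}·b^{−1}). -/

import Mathlib

open scoped Classical
noncomputable section

abbrev GF (p m : ℕ) [Fact p.Prime] := GaloisField p m

/-- The Taniguchi multiplication `T(q,α,a,b)` on `F × F` where `F = F_{p^m}`. -/
def taniMul (p m : ℕ) [Fact p.Prime] (q : ℕ) (α a b : GF p m) :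
    GF p m × GF p m → GF p m × GF p m → GF p m × GF p m :=
  fun w z =>
    (w.1 ^ q * z.1 + α ^ q ^ 2 * w.1 * z.1 ^ q
       - a * (w.1 * z.2 ^ q - α ^ q * z.1 * w.2 ^ q)
       - b * (w.2 ^ q * z.2 + α * w.2 * z.2 ^ q),
     w.1 * z.2 ^ q ^ 2 + w.2 ^ q ^ 2 * z.1)

/-- Two multiplications on `F × F` are isotopic if there are `F_p`-linear bijections
`N, L, M` with `N (w ∘₁ z) = L w ∘₂ M z` for all `w, z`. -/
def Isotopic (p m : ℕ) [Fact p.Prime]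
    (mul1 mul2 : GF p m × GF p m → GF p m × GF p m → GF p m × GF p m) : Prop :=
  ∃ N L M : (GF p m × GF p m) ≃ₗ[ZMod p] GF p m × GF p m,
    ∀ w z, N (mul1 w z) = mul2 (L w) (M z)

section Aux

variable (p m : ℕ) [Fact p.Prime]

lemma GF_pow_pm (hm : m ≠ 0) (t : GF p m) : t ^ p ^ m = t := by
  haveI : Fintype (GaloisField p m) := Fintype.ofFinite _
  have h := FiniteField.pow_card (K := GaloisField p m) t
  rwa [← Nat.card_eq_fintype_card, GaloisField.card p m hm] at h

lemma GF_smul_pow (n : ℕ) (c : ZMod p) (x : GF p m) :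
    (c • x) ^ p ^ n = c • x ^ p ^ n := by
  haveI : NeZero p := ⟨(Fact.out (p := p.Prime)).pos.ne'⟩
  obtain ⟨j, rfl⟩ := ZMod.natCast_rightInverse.surjective c
  rw [Nat.cast_smul_eq_nsmul, Nat.cast_smul_eq_nsmul, nsmul_eq_mul, nsmul_eq_mul, mul_pow]
  have h1 : ((j : GF p m)) ^ p ^ n = ((j ^ p ^ n : ℕ) : GF p m) := by push_cast; ring
  have h2 : ((j ^ p ^ n : ℕ) : GF p m) = ((j : ℕ) : GF p m) :=
    (CharP.natCast_eq_natCast (GF p m) p).mpr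
      ((ZMod.natCast_eq_natCast_iff _ _ _).mp (by push_cast [ZMod.pow_card_pow]; try rfl))
  rw [h1, h2]

/-- Frobenius `t ↦ t ^ p ^ n` as a `ZMod p`-linear equivalence of `GF p m`. -/
def frobLE (n n' : ℕ) (hnn : n + n' = m) (hm : m ≠ 0) : GF p m ≃ₗ[ZMod p] GF p m where
  toFun t := t ^ p ^ n
  invFun t := t ^ p ^ n'
  map_add' x y := add_pow_char_pow x y p n
  map_smul' c x := GF_smul_pow p m n c x
  left_inv t := by
    show (t ^ p ^ n) ^ p ^ n' = t
    rw [← pow_mul, ← pow_add, hnn, GF_pow_pm p m hm]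
  right_inv t := by
    show (t ^ p ^ n') ^ p ^ n = t
    rw [← pow_mul, ← pow_add, Nat.add_comm, hnn, GF_pow_pm p m hm]

@[simp] lemma frobLE_apply (n n' : ℕ) (hnn : n + n' = m) (hm : m ≠ 0) (t : GF p m) :
    frobLE p m n n' hnn hm t = t ^ p ^ n := rfl

/-- Multiplication by a nonzero constant as a `ZMod p`-linear equivalence. -/
def mulLE (d : GF p m) (hd : d ≠ 0) : GF p m ≃ₗ[ZMod p] GF p m where
  toFun x := d * x
  invFun x := d⁻¹ * x
  map_add' := mul_add d
  map_smul' c x := mul_smul_comm c d x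
  left_inv x := by field_simp
  right_inv x := by field_simp

@[simp] lemma mulLE_apply (d : GF p m) (hd : d ≠ 0) (x : GF p m) :
    mulLE p m d hd x = d * x := rfl

end Aux

/-- Proposition 1 (G̈oloğlu–Kölsch): `T(q,α,a,b)` is isotopic to
`T(q̄, α^{-q²}, a α^{q-1} b⁻¹, α^{q²-1} b⁻¹)` where `q̄ = p^{m-k}`. -/
theorem taniguchi_isotopic_qbar (p m k : ℕ) [Fact p.Prime] (hm : 0 < m)
    (hk1 : 1 ≤ k) (hk2 : k ≤ m - 1) (α a b : GF p m) (hα : α ≠ 0) (hb : b ≠ 0) :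
    Isotopic p m (taniMul p m (p ^ k) α a b)
      (taniMul p m (p ^ (m - k)) (α⁻¹ ^ (p ^ k) ^ 2)
        (a * α ^ (p ^ k - 1) * b⁻¹) (α ^ ((p ^ k) ^ 2 - 1) * b⁻¹)) := by
  have hp : p.Prime := Fact.out
  have hm' : m ≠ 0 := hm.ne'
  have hkm : k ≤ m := hk2.trans (Nat.sub_le m 1)
  have hd : (-(α⁻¹ * b⁻¹) : GF p m) ≠ 0 := by
    simp [hα, hb]
  have e1 : ∀ t : GF p m, (t ^ p ^ k) ^ p ^ (m - k) = t := by
    intro t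
    rw [← pow_mul, ← pow_add, Nat.add_sub_cancel' hkm, GF_pow_pm p m hm']
  have e2 : ∀ t : GF p m, (t ^ p ^ k) ^ (p ^ (m - k)) ^ 2 = t ^ p ^ (m - k) := by
    intro t
    rw [pow_two, pow_mul, e1]
  have e3 : ∀ t : GF p m, (t ^ (p ^ k) ^ 2) ^ p ^ (m - k) = t ^ p ^ k := by
    intro t
    rw [pow_two, pow_mul, e1]
  refine ⟨(mulLE p m (-(α⁻¹ * b⁻¹)) hd).prodCongr
      (frobLE p m (m - k) k (by omega) hm'),
    (LinearEquiv.prodComm (ZMod p) _ _).trans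
      ((frobLE p m k (m - k) (by omega) hm').prodCongr (frobLE p m k (m - k) (by omega) hm')),
    (LinearEquiv.prodComm (ZMod p) _ _).trans
      ((frobLE p m k (m - k) (by omega) hm').prodCongr (frobLE p m k (m - k) (by omega) hm')),
    ?_⟩
  rintro ⟨x, y⟩ ⟨u, v⟩
  have hQ1 : 1 ≤ p ^ k := Nat.one_le_pow _ _ hp.pos
  have hQ21 : 1 ≤ (p ^ k) ^ 2 := Nat.one_le_pow _ _ (by positivity)
  have e4 : (α⁻¹ ^ (p ^ k) ^ 2) ^ (p ^ (m - k)) ^ 2 = α⁻¹ := by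
    rw [show ((p : ℕ) ^ k) ^ 2 = p ^ k * p ^ k from pow_two _, pow_mul, e2, e1]
  have e5 : (α⁻¹ ^ (p ^ k) ^ 2) ^ p ^ (m - k) = α⁻¹ ^ p ^ k := e3 α⁻¹
  simp only [LinearEquiv.trans_apply, LinearEquiv.prodCongr_apply, LinearEquiv.prodComm_apply,
    mulLE_apply, frobLE_apply, taniMul, Prod.fst, Prod.snd, Prod.swap_prod_mk, Prod.mk.injEq]
  constructor
  · rw [pow_sub₀ α hα hQ1, pow_sub₀ α hα hQ21, pow_one]
    simp only [e1, e2, e3, e4, e5]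
    have r1 : α * α⁻¹ = 1 := mul_inv_cancel₀ hα
    have rb : b * b⁻¹ = 1 := mul_inv_cancel₀ hb
    have rQ : α ^ p ^ k * α⁻¹ ^ p ^ k = 1 := by rw [← mul_pow, r1, one_pow]
    have rQ2 : α ^ (p ^ k) ^ 2 * α⁻¹ ^ (p ^ k) ^ 2 = 1 := by rw [← mul_pow, r1, one_pow]
    linear_combination (y * v ^ p ^ k * b * b⁻¹) * r1 + (y * v ^ p ^ k + α⁻¹ * y ^ p ^ k * v) * rb
      - (a * α⁻¹ * b⁻¹ * v ^ p ^ k * x) * rQ + (α⁻¹ * b⁻¹ * x ^ p ^ k * u) * rQ2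
  · rw [add_pow_char_pow, mul_pow, mul_pow]
    simp only [e1, e2, e3]
    ring
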